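/- arXiv:1310.0655 — 2 statements merged into one kernel-verified Lean document; each statement's English description precedes it below -/
import Mathlib

section
/- Fix an inner product <.,.> on R^m. Let X = (X_J, X_{~J}) where the random subvectors X_J and X_{~J} are independent, and let f be measurable with f(X) a square-integrable R^m-valued random vector. Set D = Var(f(X)), V_{X_J} = Var(E(f(X)|X_J)) and V^tot_{X_J} = D - Var(E(f(X)|X_{~J})), where Var denotes the generalized variance induced by <.,.> and conditional expectations are coordinatewise. Then 0 <= V_{X_J} <= V^tot_{X_J} <= D. -/
open MeasureTheory ProbabilityTheory

/-- The generalized variance `Var(Z) = E[‖Z - E Z‖²]` for a random vector `Z` with values in a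
real inner product space with its induced norm. -/
noncomputable def gVar {Ω E : Type*} [MeasurableSpace Ω]
    [NormedAddCommGroup E] [InnerProductSpace ℝ E] [FiniteDimensional ℝ E]
    (μ : Measure Ω) (Z : Ω → E) : ℝ :=
  ∫ ω, ‖Z ω - ∫ ω', Z ω' ∂μ‖ ^ 2 ∂μ

set_option linter.unusedSectionVars false
set_option linter.unusedVariables false
set_option maxHeartbeats 1000000

section Aux

variable {Ω E : Type*} [NormedAddCommGroup E] [InnerProductSpace ℝ E] [FiniteDimensional ℝ E]

lemma my_integrable_mul [MeasurableSpace Ω] {μ : Measure Ω} {u v : Ω → ℝ}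
    (hu : MemLp u 2 μ) (hv : MemLp v 2 μ) :
    Integrable (fun ω => u ω * v ω) μ := by
  have h := L2.integrable_inner (𝕜 := ℝ) (hu.toLp u) (hv.toLp v)
  refine h.congr ?_
  filter_upwards [hu.coeFn_toLp, hv.coeFn_toLp] with ω h1 h2
  simp [h1, h2, RCLike.inner_apply, starRingEnd_apply, mul_comm]

lemma my_condexp_ae_eq_condExpL2 {m m0 : MeasurableSpace Ω} (hm : m ≤ m0) {μ : Measure Ω}
    [IsFiniteMeasure μ] {g : Ω → E} (hg : MemLp g 2 μ) :
    μ[g|m] =ᵐ[μ] (condExpL2 E ℝ hm (hg.toLp g) : Lp E 2 μ) := by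
  refine (ae_eq_condExp_of_forall_setIntegral_eq hm (hg.integrable one_le_two)
    (fun s _ hμs => integrableOn_condExpL2_of_measure_ne_top hm hμs.ne _)
    (fun s hs hμs => ?_) (aestronglyMeasurable_condExpL2 hm _)).symm
  rw [integral_condExpL2_eq hm (hg.toLp g) hs hμs.ne]
  exact setIntegral_congr_ae (hm s hs) (hg.coeFn_toLp.mono fun ω h _ => h)

lemma my_integral_norm_sq_Lp [MeasurableSpace Ω] {μ : Measure Ω} (F : Lp E 2 μ) :
    ∫ ω, ‖F ω‖ ^ 2 ∂μ = ‖F‖ ^ 2 := by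
  have h : (inner ℝ F F) = ∫ ω, ‖F ω‖ ^ 2 ∂μ := by
    rw [L2.inner_def]
    exact integral_congr_ae (Filter.Eventually.of_forall fun ω => real_inner_self_eq_norm_sq _)
  rw [← h, real_inner_self_eq_norm_sq]

lemma my_gVar_nonneg [MeasurableSpace Ω] {μ : Measure Ω} (Z : Ω → E) : 0 ≤ gVar μ Z :=
  integral_nonneg fun ω => sq_nonneg _

/-- Identification of the centered conditional expectation with the `condExpL2` projection of the
centered function. -/
lemma my_centered_condexp {m m0 : MeasurableSpace Ω} (hm : m ≤ m0) {μ : Measure Ω}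
    [IsProbabilityMeasure μ] {Y : Ω → E} (hYint : Integrable Y μ) {c : E}
    (hW2 : MemLp (fun ω => Y ω - c) 2 μ) :
    (fun ω => (μ[Y|m]) ω - c) =ᵐ[μ] (condExpL2 E ℝ hm (hW2.toLp _) : Lp E 2 μ) := by
  have h2 : μ[(fun ω => Y ω - c)|m] =ᵐ[μ] (condExpL2 E ℝ hm (hW2.toLp _) : Lp E 2 μ) :=
    my_condexp_ae_eq_condExpL2 hm hW2
  have h3 : μ[(fun ω => Y ω - c)|m] =ᵐ[μ] fun ω => (μ[Y|m]) ω - c := by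
    have h4 : μ[(Y - fun _ => c)|m] =ᵐ[μ] μ[Y|m] - μ[(fun _ => c)|m] :=
      condExp_sub hYint (integrable_const c) m
    have h5 : μ[(fun _ : Ω => c)|m] = fun _ => c := condExp_const hm c
    have h6 : μ[(fun ω => Y ω - c)|m] = μ[(Y - fun _ => c)|m] := rfl
    rw [h6]
    filter_upwards [h4] with ω h4
    rw [h4, Pi.sub_apply, h5]
  exact h3.symm.trans h2

/-- The generalized variance of a conditional expectation, expressed through an `L²` element
a.e. equal to its centering. -/
lemma my_gVar_condexp_eq {m m0 : MeasurableSpace Ω} (hm : m ≤ m0) {μ : Measure Ω}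
    [IsProbabilityMeasure μ] {Y : Ω → E} (hYint : Integrable Y μ) {c : E}
    (hc : c = ∫ ω, Y ω ∂μ) (F : Lp E 2 μ)
    (hF : (fun ω => (μ[Y|m]) ω - c) =ᵐ[μ] F) :
    gVar μ (μ[Y|m]) = ‖F‖ ^ 2 := by
  have h1 : ∫ ω, (μ[Y|m]) ω ∂μ = c := by rw [integral_condExp hm, hc]
  unfold gVar
  rw [h1, ← my_integral_norm_sq_Lp F]
  refine integral_congr_ae ?_
  filter_upwards [hF] with ω h
  rw [← h]

/-- The mean of an `L²` element a.e. equal to the centering of a conditional expectation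
is zero. -/
lemma my_integral_eq_zero {m m0 : MeasurableSpace Ω} (hm : m ≤ m0) {μ : Measure Ω}
    [IsProbabilityMeasure μ] {Y : Ω → E} (hYint : Integrable Y μ) {c : E}
    (hc : c = ∫ ω, Y ω ∂μ) {G : Ω → E}
    (hG : (fun ω => (μ[Y|m]) ω - c) =ᵐ[μ] G) :
    ∫ ω, G ω ∂μ = 0 := by
  have h0 : ∫ ω, G ω ∂μ = ∫ ω, ((μ[Y|m]) ω - c) ∂μ := integral_congr_ae hG.symm
  rw [h0, integral_sub integrable_condExp (integrable_const c), integral_condExp hm,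
    integral_const, ← hc]
  simp

end Aux

/-- For `X = (X_J, X_{~J})` with independent subvectors and `f(X)` square-integrable with values
in `ℝᵐ` with an arbitrary inner product (a finite-dimensional real inner product space), the main
sensitivity index `V_{X_J} = Var(E(f(X)|X_J))` and total sensitivity index
`V^tot_{X_J} = D - Var(E(f(X)|X_{~J}))`, where `D = Var(f(X))`, satisfy
`0 ≤ V_{X_J} ≤ V^tot_{X_J} ≤ D`. -/
theorem sensitivity_indices_ordering
    {Ω α β E : Type*} [MeasurableSpace Ω] [MeasurableSpace α] [MeasurableSpace β]
    [NormedAddCommGroup E] [InnerProductSpace ℝ E] [FiniteDimensional ℝ E]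
    [MeasurableSpace E] [BorelSpace E]
    (μ : Measure Ω) [IsProbabilityMeasure μ]
    (XJ : Ω → α) (XnJ : Ω → β) (hXJ : Measurable XJ) (hXnJ : Measurable XnJ)
    (hindep : IndepFun XJ XnJ μ)
    (f : α × β → E) (hf : Measurable f)
    (hf2 : MemLp (fun ω => f (XJ ω, XnJ ω)) 2 μ) :
    0 ≤ gVar μ (μ[(fun ω => f (XJ ω, XnJ ω)) | MeasurableSpace.comap XJ inferInstance])
    ∧ gVar μ (μ[(fun ω => f (XJ ω, XnJ ω)) | MeasurableSpace.comap XJ inferInstance])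
        ≤ gVar μ (fun ω => f (XJ ω, XnJ ω))
          - gVar μ (μ[(fun ω => f (XJ ω, XnJ ω)) | MeasurableSpace.comap XnJ inferInstance])
    ∧ gVar μ (fun ω => f (XJ ω, XnJ ω))
          - gVar μ (μ[(fun ω => f (XJ ω, XnJ ω)) | MeasurableSpace.comap XnJ inferInstance])
        ≤ gVar μ (fun ω => f (XJ ω, XnJ ω)) := by
  classical
  set Y : Ω → E := fun ω => f (XJ ω, XnJ ω) with hYdef
  have hmJ : MeasurableSpace.comap XJ inferInstance ≤ _ := hXJ.comap_le
  have hmnJ : MeasurableSpace.comap XnJ inferInstance ≤ _ := hXnJ.comap_le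
  have hYint : Integrable Y μ := hf2.integrable one_le_two
  set c : E := ∫ ω, Y ω ∂μ with hc
  have hW2 : MemLp (fun ω => Y ω - c) 2 μ := hf2.sub (memLp_const c)
  set Wlp : Lp E 2 μ := hW2.toLp _ with hWlpdef
  set Gl : Lp E 2 μ := (condExpL2 E ℝ hmJ Wlp : Lp E 2 μ) with hGldef
  set Hl : Lp E 2 μ := (condExpL2 E ℝ hmnJ Wlp : Lp E 2 μ) with hHldef
  have hgG : (fun ω => (μ[Y|MeasurableSpace.comap XJ inferInstance]) ω - c) =ᵐ[μ] Gl :=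
    my_centered_condexp hmJ hYint hW2
  have hhH : (fun ω => (μ[Y|MeasurableSpace.comap XnJ inferInstance]) ω - c) =ᵐ[μ] Hl :=
    my_centered_condexp hmnJ hYint hW2
  -- values of the generalized variances
  have hD : gVar μ Y = ‖Wlp‖ ^ 2 := by
    unfold gVar
    rw [← hc, ← my_integral_norm_sq_Lp Wlp]
    refine integral_congr_ae ?_
    filter_upwards [hW2.coeFn_toLp] with ω h
    rw [h]
  have hVJ : gVar μ (μ[Y|MeasurableSpace.comap XJ inferInstance]) = ‖Gl‖ ^ 2 :=
    my_gVar_condexp_eq hmJ hYint hc Gl hgG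
  have hVnJ : gVar μ (μ[Y|MeasurableSpace.comap XnJ inferInstance]) = ‖Hl‖ ^ 2 :=
    my_gVar_condexp_eq hmnJ hYint hc Hl hhH
  -- self-adjointness: ⟪Wlp, P Wlp⟫ = ‖P Wlp‖²
  have hWG : (inner ℝ Wlp Gl) = ‖Gl‖ ^ 2 := by
    have h : (inner ℝ ((condExpL2 E ℝ hmJ Wlp : Lp E 2 μ)) Gl) = (inner ℝ Wlp Gl) :=
      inner_condExpL2_eq_inner_fun hmJ Wlp Gl (aestronglyMeasurable_condExpL2 hmJ Wlp)
    rw [← hGldef] at h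
    rw [← h, real_inner_self_eq_norm_sq]
  have hWH : (inner ℝ Wlp Hl) = ‖Hl‖ ^ 2 := by
    have h : (inner ℝ ((condExpL2 E ℝ hmnJ Wlp : Lp E 2 μ)) Hl) = (inner ℝ Wlp Hl) :=
      inner_condExpL2_eq_inner_fun hmnJ Wlp Hl (aestronglyMeasurable_condExpL2 hmnJ Wlp)
    rw [← hHldef] at h
    rw [← h, real_inner_self_eq_norm_sq]
  -- orthogonality of the two centered conditional expectations
  obtain ⟨G', hG'm, hG'e⟩ := aestronglyMeasurable_condExpL2 (𝕜 := ℝ) hmJ Wlp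
  obtain ⟨H', hH'm, hH'e⟩ := aestronglyMeasurable_condExpL2 (𝕜 := ℝ) hmnJ Wlp
  rw [← hGldef] at hG'e
  rw [← hHldef] at hH'e
  have hG'2 : MemLp G' 2 μ := (Lp.memLp Gl).ae_eq hG'e
  have hH'2 : MemLp H' 2 μ := (Lp.memLp Hl).ae_eq hH'e
  have hG'int : Integrable G' μ := hG'2.integrable one_le_two
  have hH'int : Integrable H' μ := hH'2.integrable one_le_two
  have hGl0 : ∫ ω, G' ω ∂μ = 0 := my_integral_eq_zero hmJ hYint hc (hgG.trans hG'e)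
  have hHl0 : ∫ ω, H' ω ∂μ = 0 := my_integral_eq_zero hmnJ hYint hc (hhH.trans hH'e)
  have hGH : (inner ℝ Gl Hl) = 0 := by
    set b := stdOrthonormalBasis ℝ E with hb
    rw [L2.inner_def]
    have hae : (fun ω => (inner ℝ (Gl ω) (Hl ω))) =ᵐ[μ]
        fun ω => ∑ i, (inner ℝ (b i) (G' ω)) * (inner ℝ (b i) (H' ω)) := by
      filter_upwards [hG'e, hH'e] with ω h1 h2
      rw [h1, h2, ← b.sum_inner_mul_inner (G' ω) (H' ω)]
      exact Finset.sum_congr rfl fun i _ => by rw [real_inner_comm]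
    rw [integral_congr_ae hae,
      integral_finset_sum _ fun i _ => my_integrable_mul (hG'2.const_inner _) (hH'2.const_inner _)]
    refine Finset.sum_eq_zero fun i _ => ?_
    have hu : Measurable[MeasurableSpace.comap XJ inferInstance]
        fun ω => (inner ℝ (b i) (G' ω)) :=
      ((innerSL ℝ (b i)).continuous.comp_stronglyMeasurable hG'm).measurable
    have hv : Measurable[MeasurableSpace.comap XnJ inferInstance]
        fun ω => (inner ℝ (b i) (H' ω)) :=
      ((innerSL ℝ (b i)).continuous.comp_stronglyMeasurable hH'm).measurable
    have hσ : Indep (MeasurableSpace.comap XJ inferInstance)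
        (MeasurableSpace.comap XnJ inferInstance) μ := (IndepFun_iff_Indep XJ XnJ μ).1 hindep
    have hIF : IndepFun (fun ω => (inner ℝ (b i) (G' ω)))
        (fun ω => (inner ℝ (b i) (H' ω))) μ := by
      rw [IndepFun_iff_Indep]
      exact indep_of_indep_of_le_right (indep_of_indep_of_le_left hσ hu.comap_le) hv.comap_le
    have hmul : ∫ a, (inner ℝ (b i) (G' a)) * (inner ℝ (b i) (H' a)) ∂μ =
        (∫ a, (inner ℝ (b i) (G' a)) ∂μ) * ∫ a, (inner ℝ (b i) (H' a)) ∂μ :=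
      hIF.integral_fun_mul_eq_mul_integral ((hG'2.const_inner _).integrable one_le_two).aestronglyMeasurable
        ((hH'2.const_inner _).integrable one_le_two).aestronglyMeasurable
    rw [hmul, integral_inner hG'int, hGl0, inner_zero_right, zero_mul]
  -- the Pythagorean/Cauchy–Schwarz step
  have key : ‖Gl‖ ^ 2 + ‖Hl‖ ^ 2 ≤ ‖Wlp‖ ^ 2 := by
    have hZn : ‖Gl + Hl‖ ^ 2 = ‖Gl‖ ^ 2 + ‖Hl‖ ^ 2 := by
      rw [norm_add_sq_real, hGH]; ring
    have hWZ : (inner ℝ Wlp (Gl + Hl)) = ‖Gl‖ ^ 2 + ‖Hl‖ ^ 2 := by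
      rw [inner_add_right, hWG, hWH]
    have hCS := real_inner_le_norm Wlp (Gl + Hl)
    nlinarith [norm_nonneg Wlp, norm_nonneg (Gl + Hl), sq_nonneg (‖Wlp‖ - ‖Gl + Hl‖)]
  refine ⟨my_gVar_nonneg _, ?_, ?_⟩
  · rw [hVJ, hVnJ, hD]; linarith
  · have h := my_gVar_nonneg (μ := μ) (μ[Y|MeasurableSpace.comap XnJ inferInstance])
    linarith
end

section
/- Fix an inner product <.,.> on R^m with induced norm |.|. Let X = (X_J, X_{~J}) with X_J and X_{~J} independent, let Y_J have the same distribution as X_J and be independent of X, and let f be measurable with f(X) square-integrable R^m-valued. Define D = Var(f(X)) and V^tot_{X_J} = D - Var(E(f(X)|X_{~J})) using the generalized variance induced by <.,.>. Then the mean square error of approximating f(X) by randomly fixing X_J satisfies E[|f(Y_J, X_{~J}) - f(X)|^2] = 2 (D - Var(E(f(X)|X_{~J}))) = 2 V^tot_{X_J}. -/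
open MeasureTheory ProbabilityTheory
open RealInnerProductSpace

lemma sq_integral_le {α : Type*} [MeasurableSpace α] (κ : Measure α) [IsProbabilityMeasure κ]
    {h : α → ℝ} (h1 : Integrable h κ) (h2 : Integrable (fun x => h x ^ 2) κ) :
    (∫ x, h x ∂κ) ^ 2 ≤ ∫ x, h x ^ 2 ∂κ := by
  set m := ∫ x, h x ∂κ with hm
  have key : 0 ≤ ∫ x, (h x - m) ^ 2 ∂κ := integral_nonneg fun x => sq_nonneg _
  have expand : ∫ x, (h x - m) ^ 2 ∂κ = ∫ x, h x ^ 2 ∂κ - 2 * m * m + m ^ 2 := by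
    have : ∀ x, (h x - m) ^ 2 = h x ^ 2 - 2 * h x * m + m ^ 2 := fun x => by ring
    simp_rw [this]
    have ha : Integrable (fun x => h x ^ 2 - 2 * h x * m) κ :=
      h2.sub ((h1.const_mul 2).mul_const m)
    rw [integral_add ha (integrable_const _),
      integral_sub h2 ((h1.const_mul 2).mul_const m), integral_mul_const, integral_const_mul,
      integral_const, probReal_univ, smul_eq_mul, one_mul, ← hm]
  nlinarith [key, expand]

lemma gVar_congr_ae {Ω E : Type*} [MeasurableSpace Ω]
    [NormedAddCommGroup E] [InnerProductSpace ℝ E] [FiniteDimensional ℝ E]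
    (μ : Measure Ω) {Z W : Ω → E} (h : Z =ᵐ[μ] W) : gVar μ Z = gVar μ W := by
  unfold gVar
  rw [integral_congr_ae h]
  exact integral_congr_ae (h.mono fun ω hω => by dsimp only; rw [hω])

lemma gVar_eq_sub {Ω E : Type*} [MeasurableSpace Ω]
    [NormedAddCommGroup E] [InnerProductSpace ℝ E] [FiniteDimensional ℝ E]
    (μ : Measure Ω) [IsProbabilityMeasure μ] {Z : Ω → E}
    (h1 : Integrable Z μ) (h2 : Integrable (fun ω => ‖Z ω‖ ^ 2) μ) :
    gVar μ Z = (∫ ω, ‖Z ω‖ ^ 2 ∂μ) - ‖∫ ω, Z ω ∂μ‖ ^ 2 := by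
  set m := ∫ ω, Z ω ∂μ with hm
  unfold gVar
  have expand : ∀ ω, ‖Z ω - m‖ ^ 2 = ‖Z ω‖ ^ 2 - 2 * ⟪m, Z ω⟫ + ‖m‖ ^ 2 := fun ω => by
    rw [norm_sub_sq_real, real_inner_comm]
  simp_rw [← hm, expand]
  have ha : Integrable (fun ω => ‖Z ω‖ ^ 2 - 2 * ⟪m, Z ω⟫) μ :=
    h2.sub ((h1.const_inner m).const_mul 2)
  have hb : Integrable (fun ω => 2 * ⟪m, Z ω⟫) μ := (h1.const_inner m).const_mul 2
  rw [integral_add ha (integrable_const _),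
    integral_sub h2 hb, integral_const_mul,
    integral_inner h1 m, ← hm, real_inner_self_eq_norm_sq,
    integral_const, probReal_univ, one_smul]
  ring


/-- Mean square error of randomly fixing `X_J`: for `X = (X_J, X_{~J})` with independent
subvectors, `Y_J` an independent copy of `X_J` independent of `X`, and `f(X)` square-integrable
with values in `ℝᵐ` with an arbitrary inner product,
`E[‖f(Y_J, X_{~J}) - f(X)‖²] = 2 (Var(f(X)) - Var(E(f(X)|X_{~J}))) = 2 V^tot_{X_J}`. -/
theorem mse_of_fixing_randomly
    {Ω α β E : Type*} [MeasurableSpace Ω] [MeasurableSpace α] [MeasurableSpace β]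
    [NormedAddCommGroup E] [InnerProductSpace ℝ E] [FiniteDimensional ℝ E]
    [MeasurableSpace E] [BorelSpace E]
    (μ : Measure Ω) [IsProbabilityMeasure μ]
    (XJ YJ : Ω → α) (XnJ : Ω → β)
    (hXJ : Measurable XJ) (hYJ : Measurable YJ) (hXnJ : Measurable XnJ)
    (hindep : IndepFun XJ XnJ μ)
    (hYid : IdentDistrib YJ XJ μ μ)
    (hYindep : IndepFun YJ (fun ω => (XJ ω, XnJ ω)) μ)
    (f : α × β → E) (hf : Measurable f)
    (hf2 : MemLp (fun ω => f (XJ ω, XnJ ω)) 2 μ) :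
    ∫ ω, ‖f (YJ ω, XnJ ω) - f (XJ ω, XnJ ω)‖ ^ 2 ∂μ
      = 2 * (gVar μ (fun ω => f (XJ ω, XnJ ω))
          - gVar μ (μ[(fun ω => f (XJ ω, XnJ ω)) | MeasurableSpace.comap XnJ inferInstance])) := by
  set κ := μ.map XJ with hκdef
  set ν := μ.map XnJ with hνdef
  haveI hκP : IsProbabilityMeasure κ := Measure.isProbabilityMeasure_map hXJ.aemeasurable
  haveI hνP : IsProbabilityMeasure ν := Measure.isProbabilityMeasure_map hXnJ.aemeasurable
  set π := κ.prod ν with hπdef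
  have hpair : Measurable (fun ω => (XJ ω, XnJ ω)) := hXJ.prodMk hXnJ
  have hmap : μ.map (fun ω => (XJ ω, XnJ ω)) = π :=
    (indepFun_iff_map_prod_eq_prod_map_map hXJ.aemeasurable hXnJ.aemeasurable).mp hindep
  have hfs : StronglyMeasurable f := hf.stronglyMeasurable
  have hf2π : MemLp f 2 π := by
    rw [← hmap]
    exact (memLp_map_measure_iff hfs.aestronglyMeasurable hpair.aemeasurable).mpr hf2
  have hfπ : Integrable f π := hf2π.integrable one_le_two
  have hnf2 : Integrable (fun p => ‖f p‖ ^ 2) π := hf2π.norm.integrable_sq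
  -- the function g
  set g : β → E := fun b => ∫ a, f (a, b) ∂κ with hgdef
  have hgs : StronglyMeasurable g := hfs.integral_prod_left'
  have hgint : Integrable g ν := hfπ.integral_prod_right
  have hq : Integrable (fun b => ∫ a, ‖f (a, b)‖ ^ 2 ∂κ) ν := hnf2.integral_prod_right
  have hslice : ∀ᵐ b ∂ν, Integrable (fun a => f (a, b)) κ := hfπ.prod_left_ae
  have hslice2 : ∀ᵐ b ∂ν, Integrable (fun a => ‖f (a, b)‖ ^ 2) κ := hnf2.prod_left_ae
  have hgsq_le : ∀ᵐ b ∂ν, ‖g b‖ ^ 2 ≤ ∫ a, ‖f (a, b)‖ ^ 2 ∂κ := by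
    filter_upwards [hslice, hslice2] with b h1 h2
    calc ‖g b‖ ^ 2 ≤ (∫ a, ‖f (a, b)‖ ∂κ) ^ 2 := by
          apply pow_le_pow_left₀ (norm_nonneg _) (norm_integral_le_integral_norm _)
      _ ≤ ∫ a, ‖f (a, b)‖ ^ 2 ∂κ := sq_integral_le κ h1.norm h2
  have hgsq : Integrable (fun b => ‖g b‖ ^ 2) ν := by
    refine hq.mono' ((hgs.measurable.norm.pow_const 2).aestronglyMeasurable) ?_
    filter_upwards [hgsq_le] with b hb
    rwa [Real.norm_eq_abs, abs_of_nonneg (sq_nonneg _)]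
  -- mean
  have hmean : ∫ p, f p ∂π = ∫ b, g b ∂ν := by
    have hfπ' : Integrable (Function.uncurry fun a b => f (a, b)) π := hfπ
    rw [integral_prod _ hfπ, integral_integral_swap hfπ']
  -- conditional expectation identification
  have hm : MeasurableSpace.comap XnJ inferInstance ≤ ‹MeasurableSpace Ω› := hXnJ.comap_le
  have hZint : Integrable (fun ω => f (XJ ω, XnJ ω)) μ := hf2.integrable one_le_two
  have hWint : Integrable (fun ω => g (XnJ ω)) μ :=
    (integrable_map_measure hgs.aestronglyMeasurable hXnJ.aemeasurable).mp hgint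
  have hWsq : Integrable (fun ω => ‖g (XnJ ω)‖ ^ 2) μ :=
    (integrable_map_measure ((hgs.measurable.norm.pow_const 2).aestronglyMeasurable)
      hXnJ.aemeasurable).mp hgsq
  have hce : (fun ω => g (XnJ ω))
      =ᵐ[μ] μ[(fun ω => f (XJ ω, XnJ ω)) | MeasurableSpace.comap XnJ inferInstance] := by
    refine ae_eq_condExp_of_forall_setIntegral_eq hm hZint
      (fun s _ _ => hWint.integrableOn) ?_ ?_
    · rintro s ⟨t, ht, rfl⟩ -
      rw [← setIntegral_map ht hgs.aestronglyMeasurable hXnJ.aemeasurable]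
      have hpre : XnJ ⁻¹' t = (fun ω => (XJ ω, XnJ ω)) ⁻¹' (Set.univ ×ˢ t) := by
        ext ω; simp
      rw [hpre, ← setIntegral_map (MeasurableSet.univ.prod ht) hfs.aestronglyMeasurable
        hpair.aemeasurable, hmap]
      have hfr : Integrable f (κ.prod (ν.restrict t)) := by
        have := hfπ.restrict (s := Set.univ ×ˢ t)
        rwa [hπdef, ← Measure.prod_restrict, Measure.restrict_univ] at this
      rw [show (π.restrict (Set.univ ×ˢ t)) = κ.prod (ν.restrict t) by
        rw [hπdef, ← Measure.prod_restrict, Measure.restrict_univ]]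
      have hfr' : Integrable (Function.uncurry fun a b => f (a, b)) (κ.prod (ν.restrict t)) := hfr
      rw [integral_prod _ hfr, integral_integral_swap hfr']
    · exact StronglyMeasurable.aestronglyMeasurable
        (hgs.comp_measurable (Measurable.of_comap_le le_rfl))
  -- variances
  have hZmap2 : ∫ ω, ‖f (XJ ω, XnJ ω)‖ ^ 2 ∂μ = ∫ p, ‖f p‖ ^ 2 ∂π := by
    rw [← hmap, integral_map hpair.aemeasurable
      ((hf.norm.pow_const 2).aestronglyMeasurable)]
  have hZmap1 : ∫ ω, f (XJ ω, XnJ ω) ∂μ = ∫ p, f p ∂π := by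
    rw [← hmap, integral_map hpair.aemeasurable hfs.aestronglyMeasurable]
  have hVarZ : gVar μ (fun ω => f (XJ ω, XnJ ω))
      = (∫ p, ‖f p‖ ^ 2 ∂π) - ‖∫ p, f p ∂π‖ ^ 2 := by
    rw [gVar_eq_sub μ hZint (by simpa using hf2.norm.integrable_sq), hZmap2, hZmap1]
  have hWmap2 : ∫ ω, ‖g (XnJ ω)‖ ^ 2 ∂μ = ∫ b, ‖g b‖ ^ 2 ∂ν := by
    rw [hνdef, integral_map hXnJ.aemeasurable
      ((hgs.measurable.norm.pow_const 2).aestronglyMeasurable)]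
  have hWmap1 : ∫ ω, g (XnJ ω) ∂μ = ∫ b, g b ∂ν := by
    rw [hνdef, integral_map hXnJ.aemeasurable hgs.aestronglyMeasurable]
  have hVarW : gVar μ (μ[(fun ω => f (XJ ω, XnJ ω)) | MeasurableSpace.comap XnJ inferInstance])
      = (∫ b, ‖g b‖ ^ 2 ∂ν) - ‖∫ p, f p ∂π‖ ^ 2 := by
    rw [← gVar_congr_ae μ hce, gVar_eq_sub μ hWint hWsq, hWmap2, hWmap1, hmean]
  -- the LHS
  have hmap2 : μ.map (fun ω => (YJ ω, (XJ ω, XnJ ω))) = κ.prod π := by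
    rw [(indepFun_iff_map_prod_eq_prod_map_map hYJ.aemeasurable hpair.aemeasurable).mp hYindep,
      hYid.map_eq, hmap, hκdef]
  have hF : Measurable (fun q : α × α × β => ‖f (q.1, q.2.2) - f q.2‖ ^ 2) :=
    ((hf.comp (measurable_fst.prodMk measurable_snd.snd)).sub
      (hf.comp measurable_snd)).norm.pow_const 2
  have hLHS0 : ∫ ω, ‖f (YJ ω, XnJ ω) - f (XJ ω, XnJ ω)‖ ^ 2 ∂μ
      = ∫ q : α × α × β, ‖f (q.1, q.2.2) - f q.2‖ ^ 2 ∂(κ.prod π) := by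
    rw [← hmap2, integral_map (hYJ.prodMk hpair).aemeasurable
      hF.aestronglyMeasurable]
  have mpsndπ : MeasurePreserving (Prod.snd) π ν :=
    ⟨measurable_snd, by rw [hπdef, Measure.map_snd_prod, measure_univ, one_smul]⟩
  have mpsnd : MeasurePreserving (Prod.snd) (κ.prod π) π :=
    ⟨measurable_snd, by rw [Measure.map_snd_prod, measure_univ, one_smul]⟩
  have mp13 : MeasurePreserving (fun q : α × α × β => (q.1, q.2.2)) (κ.prod π) π :=
    (MeasurePreserving.id κ).prod mpsndπ
  have h1 : Integrable (fun q : α × α × β => ‖f (q.1, q.2.2)‖ ^ 2) (κ.prod π) :=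
    (mp13.integrable_comp ((hf.norm.pow_const 2).aestronglyMeasurable)).mpr hnf2
  have h2 : Integrable (fun q : α × α × β => ‖f q.2‖ ^ 2) (κ.prod π) :=
    (mpsnd.integrable_comp ((hf.norm.pow_const 2).aestronglyMeasurable)).mpr hnf2
  have h3 : Integrable (fun q : α × α × β => ⟪f q.2, f (q.1, q.2.2)⟫) (κ.prod π) := by
    refine ((h1.add h2).div_const 2).mono'
      (((hf.comp measurable_snd).inner
        (hf.comp (measurable_fst.prodMk measurable_snd.snd))).aestronglyMeasurable) ?_
    refine Filter.Eventually.of_forall fun q => ?_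
    rw [Real.norm_eq_abs]
    simp only [Pi.add_apply]
    have := abs_real_inner_le_norm (f q.2) (f (q.1, q.2.2))
    nlinarith [two_mul_le_add_sq ‖f q.2‖ ‖f (q.1, q.2.2)‖,
      abs_nonneg (⟪f q.2, f (q.1, q.2.2)⟫), norm_nonneg (f q.2), norm_nonneg (f (q.1, q.2.2))]
  have hexp : ∀ q : α × α × β, ‖f (q.1, q.2.2) - f q.2‖ ^ 2
      = ‖f (q.1, q.2.2)‖ ^ 2 + ‖f q.2‖ ^ 2 - 2 * ⟪f q.2, f (q.1, q.2.2)⟫ := by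
    intro q
    rw [norm_sub_sq_real, real_inner_comm]; ring
  have hint1 : ∫ q : α × α × β, ‖f (q.1, q.2.2)‖ ^ 2 ∂(κ.prod π) = ∫ p, ‖f p‖ ^ 2 ∂π := by
    have h := integral_map (μ := κ.prod π) (f := fun p : α × β => ‖f p‖ ^ 2) mp13.measurable.aemeasurable
      ((hf.norm.pow_const 2).aestronglyMeasurable)
    rw [mp13.map_eq] at h
    exact h.symm
  have hint2 : ∫ q : α × α × β, ‖f q.2‖ ^ 2 ∂(κ.prod π) = ∫ p, ‖f p‖ ^ 2 ∂π := by
    have h := integral_map (μ := κ.prod π) (f := fun p : α × β => ‖f p‖ ^ 2) measurable_snd.aemeasurable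
      ((hf.norm.pow_const 2).aestronglyMeasurable)
    rw [mpsnd.map_eq] at h
    exact h.symm
  -- cross term
  have hgsnd : Integrable (fun p : α × β => ‖g p.2‖ ^ 2) π :=
    (mpsndπ.integrable_comp ((hgs.measurable.norm.pow_const 2).aestronglyMeasurable)).mpr hgsq
  have hK : Integrable (fun p : α × β => ⟪f p, g p.2⟫) π := by
    refine ((hnf2.add hgsnd).div_const 2).mono'
      ((hf.inner (hgs.measurable.comp measurable_snd)).aestronglyMeasurable) ?_
    refine Filter.Eventually.of_forall fun p => ?_
    rw [Real.norm_eq_abs]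
    simp only [Pi.add_apply]
    nlinarith [two_mul_le_add_sq ‖f p‖ ‖g p.2‖, abs_real_inner_le_norm (f p) (g p.2),
      abs_nonneg (⟪f p, g p.2⟫), norm_nonneg (f p), norm_nonneg (g p.2)]
  have hsliceπ : ∀ᵐ p ∂π, Integrable (fun y => f (y, p.2)) κ :=
    ae_of_ae_map (p := fun b => Integrable (fun y => f (y, b)) κ)
      measurable_snd.aemeasurable (by rwa [mpsndπ.map_eq])
  have hcross : ∫ q : α × α × β, ⟪f q.2, f (q.1, q.2.2)⟫ ∂(κ.prod π) = ∫ b, ‖g b‖ ^ 2 ∂ν := by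
    have step1 : ∫ q : α × α × β, ⟪f q.2, f (q.1, q.2.2)⟫ ∂(κ.prod π)
        = ∫ z : (α × β) × α, ⟪f z.1, f (z.2, z.1.2)⟫ ∂(π.prod κ) := by
      rw [← integral_prod_swap (fun q : α × α × β => ⟪f q.2, f (q.1, q.2.2)⟫)]
      rfl
    have step2 : ∫ z : (α × β) × α, ⟪f z.1, f (z.2, z.1.2)⟫ ∂(π.prod κ)
        = ∫ p : α × β, ⟪f p, g p.2⟫ ∂π := by
      have h3s : Integrable (fun z : (α × β) × α => ⟪f z.1, f (z.2, z.1.2)⟫) (π.prod κ) :=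
        h3.swap
      rw [integral_prod _ h3s]
      refine integral_congr_ae ?_
      filter_upwards [hsliceπ] with p hp
      exact integral_inner hp (f p)
    have step3 : ∫ p : α × β, ⟪f p, g p.2⟫ ∂π = ∫ p : α × β, ⟪g p.2, f p⟫ ∂π :=
      integral_congr_ae (Filter.Eventually.of_forall fun p => real_inner_comm _ _)
    have hK' : Integrable (fun p : α × β => ⟪g p.2, f p⟫) π := by
      refine hK.congr (Filter.Eventually.of_forall fun p => real_inner_comm _ _)
    have step4 : ∫ p : α × β, ⟪g p.2, f p⟫ ∂π
        = ∫ z : β × α, ⟪g z.1, f (z.2, z.1)⟫ ∂(ν.prod κ) := by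
      rw [hπdef, ← integral_prod_swap (fun p : α × β => ⟪g p.2, f p⟫)]
      rfl
    have step5 : ∫ z : β × α, ⟪g z.1, f (z.2, z.1)⟫ ∂(ν.prod κ) = ∫ b, ‖g b‖ ^ 2 ∂ν := by
      have hKs : Integrable (fun z : β × α => ⟪g z.1, f (z.2, z.1)⟫) (ν.prod κ) := hK'.swap
      rw [integral_prod _ hKs]
      refine integral_congr_ae ?_
      filter_upwards [hslice] with b hb
      rw [integral_inner hb (g b)]
      exact real_inner_self_eq_norm_sq (g b)
    rw [step1, step2, step3, step4, step5]
  have hLHS : ∫ ω, ‖f (YJ ω, XnJ ω) - f (XJ ω, XnJ ω)‖ ^ 2 ∂μ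
      = 2 * (∫ p, ‖f p‖ ^ 2 ∂π) - 2 * ∫ b, ‖g b‖ ^ 2 ∂ν := by
    rw [hLHS0]
    simp_rw [hexp]
    have ha : Integrable (fun q : α × α × β => ‖f (q.1, q.2.2)‖ ^ 2 + ‖f q.2‖ ^ 2) (κ.prod π) :=
      h1.add h2
    have hb : Integrable (fun q : α × α × β => 2 * ⟪f q.2, f (q.1, q.2.2)⟫) (κ.prod π) :=
      h3.const_mul 2
    rw [integral_sub ha hb, integral_add h1 h2, integral_const_mul, hint1, hint2, hcross]
    ring
  rw [hLHS, hVarZ, hVarW]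
  ring
end
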